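/- Consider a sequence of stochastic matrices A(1), A(2), … of size n, all irreducible with positive diagonals and sharing the same Perron vector π, and the iteration x(t) = A(t) x(t−1). Suppose β < 1 is a uniform upper bound on λ_2(A(t)† A(t)) for all t. Then the variance V(t) = ‖x(t) − (Σ_i π_i x_i(0))·𝟙‖_π² satisfies V(t) ≤ β^t V(0); in particular x(t) converges to (Σ_i π_i x_i(0))·𝟙 and the convergence rate ρ = lim sup ‖x(t) − x*‖^{1/t} satisfies ρ ≤ √β. -/

import Mathlib

open Finset Matrix Filter

def IsStochastic {n : ℕ} (P : Matrix (Fin n) (Fin n) ℝ) : Prop :=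
  (∀ i j, 0 ≤ P i j) ∧ ∀ i, ∑ j, P i j = 1

def IsIrreducibleM {n : ℕ} (P : Matrix (Fin n) (Fin n) ℝ) : Prop :=
  ∀ i j, ∃ k : ℕ, 0 < (P ^ k) i j

/-- The `π`-adjoint of `A`: `(A†)_{ij} = (π_j/π_i) A_{ji}`. -/
noncomputable def piAdj {n : ℕ} (π : Fin n → ℝ) (A : Matrix (Fin n) (Fin n) ℝ) :
    Matrix (Fin n) (Fin n) ℝ :=
  Matrix.of fun i j => π j / π i * A j i

/-- The second largest eigenvalue: the supremum of eigenvalues admitting an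
eigenvector `π`-orthogonal to the all-ones vector. -/
noncomputable def lambda2 {n : ℕ} (π : Fin n → ℝ) (P : Matrix (Fin n) (Fin n) ℝ) : ℝ :=
  sSup {l : ℝ | ∃ x : Fin n → ℝ, x ≠ 0 ∧ (∑ i, π i * x i) = 0 ∧ P.mulVec x = l • x}

lemma dot_mulVec_symm {n : ℕ} (S : Matrix (Fin n) (Fin n) ℝ)
    (hS : ∀ i j, S i j = S j i) (a b : Fin n → ℝ) :
    ∑ i, S.mulVec a i * b i = ∑ i, a i * S.mulVec b i := by
  simp only [mulVec, dotProduct, Finset.sum_mul, Finset.mul_sum]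
  rw [Finset.sum_comm]
  exact Finset.sum_congr rfl fun j _ => Finset.sum_congr rfl fun i _ => by rw [hS i j]; ring

lemma top_eigen_orth {n : ℕ} (hn : 2 ≤ n)
    (S : Matrix (Fin n) (Fin n) ℝ) (hS : ∀ i j, S i j = S j i)
    (w : Fin n → ℝ) (hw : w ≠ 0) (hSw : S.mulVec w = w) :
    ∃ μ : ℝ, (∃ u : Fin n → ℝ, u ≠ 0 ∧ (∑ i, w i * u i) = 0 ∧ S.mulVec u = μ • u) ∧
      ∀ z : Fin n → ℝ, (∑ i, w i * z i) = 0 →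
        ∑ i, z i * S.mulVec z i ≤ μ * ∑ i, z i ^ 2 := by
  classical
  let we : EuclideanSpace ℝ (Fin n) := (WithLp.equiv 2 (Fin n → ℝ)).symm w
  have hwe : we ≠ 0 := fun h => hw (by simpa [we] using congrArg WithLp.ofLp h)
  have hinner : ∀ a b : EuclideanSpace ℝ (Fin n), (inner ℝ a b : ℝ) = ∑ i, a i * b i :=
    fun a b => by simp [PiLp.inner_apply, RCLike.inner_apply, mul_comm]
  let T : EuclideanSpace ℝ (Fin n) →ₗ[ℝ] EuclideanSpace ℝ (Fin n) := Matrix.toEuclideanLin S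
  have hTapp : ∀ z : EuclideanSpace ℝ (Fin n), ∀ i, T z i = S.mulVec z i := fun z i => rfl
  have hTwe : T we = we := by
    ext i
    show S.mulVec w i = w i
    rw [hSw]
  have hTsymm : ∀ a b : EuclideanSpace ℝ (Fin n), (inner ℝ (T a) b : ℝ) = inner ℝ a (T b) := by
    intro a b
    rw [hinner, hinner]
    exact dot_mulVec_symm S hS a b
  set W : Submodule ℝ (EuclideanSpace ℝ (Fin n)) := (ℝ ∙ we)ᗮ with hW
  have hmemW : ∀ z : EuclideanSpace ℝ (Fin n), z ∈ W ↔ (∑ i, w i * z i) = 0 := by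
    intro z
    rw [hW, Submodule.mem_orthogonal_singleton_iff_inner_right, hinner]
    exact Iff.rfl
  have hinv : ∀ z ∈ W, T z ∈ W := by
    intro z hz
    rw [hW, Submodule.mem_orthogonal_singleton_iff_inner_right, ← hTsymm we z, hTwe]
    exact Submodule.mem_orthogonal_singleton_iff_inner_right.mp hz
  -- restrict T to W
  let T' : W →ₗ[ℝ] W := T.restrict hinv
  have hT'symm : T'.IsSymmetric := by
    intro u v
    simp only [Submodule.coe_inner, LinearMap.restrict_coe_apply]
    exact hTsymm u v
  -- W is nontrivial
  have hrank : Module.finrank ℝ W = n - 1 := by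
    have h1 : Module.finrank ℝ (ℝ ∙ we) = 1 := finrank_span_singleton hwe
    have h2 := Submodule.finrank_add_finrank_orthogonal (K := (ℝ ∙ we))
    rw [h1, finrank_euclideanSpace_fin, ← hW] at h2
    omega
  have : Nontrivial W := by
    apply Module.nontrivial_of_finrank_pos (R := ℝ)
    rw [hrank]; omega
  -- the top eigenvalue of T'
  set μ : ℝ := ⨆ x : { x : W // x ≠ 0 }, RCLike.re (inner ℝ (T' x) (x : W) : ℝ) / ‖(x : W)‖ ^ 2
    with hμ
  have hev : Module.End.HasEigenvalue T' μ :=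
    by have := hT'symm.hasEigenvalue_iSup_of_finiteDimensional; exact this
  obtain ⟨u, hu⟩ := hev.exists_hasEigenvector
  have huE : ((u : EuclideanSpace ℝ (Fin n)) : Fin n → ℝ) ≠ 0 := by
    intro h
    exact hu.2 (Submodule.coe_eq_zero.mp (WithLp.ofLp_injective 2 (by simpa using h)))
  have hTu : T (u : EuclideanSpace ℝ (Fin n)) = μ • (u : EuclideanSpace ℝ (Fin n)) := by
    have := hu.apply_eq_smul
    calc T (u : EuclideanSpace ℝ (Fin n)) = ((T' u : W) : EuclideanSpace ℝ (Fin n)) :=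
          (LinearMap.restrict_coe_apply _ _ _).symm
    _ = ((μ • u : W) : EuclideanSpace ℝ (Fin n)) := by rw [this]
    _ = μ • (u : EuclideanSpace ℝ (Fin n)) := rfl
  -- the Rayleigh quotient is bounded above
  set C : ℝ := ‖LinearMap.toContinuousLinearMap T‖ with hC
  have hbdd : BddAbove (Set.range fun x : { x : W // x ≠ 0 } =>
      RCLike.re (inner ℝ (T' x) (x : W) : ℝ) / ‖(x : W)‖ ^ 2) := by
    refine ⟨C, ?_⟩
    rintro r ⟨x, rfl⟩
    have hx0 : (0 : ℝ) < ‖(x : W)‖ ^ 2 := pow_pos (norm_pos_iff.mpr x.2) 2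
    rw [div_le_iff₀ hx0]
    have h1 : (inner ℝ (T' x) ((x : W) : W) : ℝ) = inner ℝ (T ((x : W) : EuclideanSpace ℝ (Fin n)))
        ((x : W) : EuclideanSpace ℝ (Fin n)) := by
      rw [Submodule.coe_inner]
      rfl
    have h2 : (inner ℝ (T ((x : W) : EuclideanSpace ℝ (Fin n)))
        ((x : W) : EuclideanSpace ℝ (Fin n)) : ℝ)
        ≤ ‖T ((x : W) : EuclideanSpace ℝ (Fin n))‖ * ‖((x : W) : EuclideanSpace ℝ (Fin n))‖ :=
      real_inner_le_norm _ _
    have h3 : ‖T ((x : W) : EuclideanSpace ℝ (Fin n))‖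
        ≤ C * ‖((x : W) : EuclideanSpace ℝ (Fin n))‖ := by
      rw [hC]
      exact (LinearMap.toContinuousLinearMap T).le_opNorm _
    have h4 : ‖((x : W) : EuclideanSpace ℝ (Fin n))‖ = ‖(x : W)‖ := by
      simp [Submodule.coe_norm]
    simp only [RCLike.re_to_real]
    calc (inner ℝ (T' x) ((x : W) : W) : ℝ) ≤ ‖T ((x : W) : EuclideanSpace ℝ (Fin n))‖ *
          ‖((x : W) : EuclideanSpace ℝ (Fin n))‖ := h1 ▸ h2
    _ ≤ (C * ‖((x : W) : EuclideanSpace ℝ (Fin n))‖) * ‖((x : W) : EuclideanSpace ℝ (Fin n))‖ :=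
          mul_le_mul_of_nonneg_right h3 (norm_nonneg _)
    _ = C * ‖(x : W)‖ ^ 2 := by rw [h4]; ring
  refine ⟨μ, ⟨(u : EuclideanSpace ℝ (Fin n)), huE, (hmemW _).mp u.2, ?_⟩, ?_⟩
  · funext i
    rw [← hTapp, hTu]
    rfl
  · intro z hz
    by_cases hz0 : z = 0
    · subst hz0
      simp [mulVec_zero]
    · set zE : EuclideanSpace ℝ (Fin n) := (WithLp.equiv 2 (Fin n → ℝ)).symm z with hzE
      have hzW : zE ∈ W := (hmemW zE).mpr hz
      have hzE0 : zE ≠ 0 := fun h => hz0 (by simpa [hzE] using congrArg WithLp.ofLp h)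
      set xx : { x : W // x ≠ 0 } := ⟨⟨zE, hzW⟩, by
        intro h
        exact hzE0 (congrArg Subtype.val h)⟩ with hxx
      have hle : RCLike.re (inner ℝ (T' xx) ((xx : W) : W) : ℝ) / ‖((xx : W) : W)‖ ^ 2 ≤ μ :=
        le_ciSup hbdd xx
      have hnorm : ‖((xx : W) : W)‖ = ‖zE‖ := by simp [hxx, Submodule.coe_norm]
      have hnpos : (0 : ℝ) < ‖zE‖ ^ 2 := pow_pos (norm_pos_iff.mpr hzE0) 2
      have hip : (inner ℝ (T' xx) ((xx : W) : W) : ℝ) = inner ℝ (T zE) zE := by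
        rw [Submodule.coe_inner]
        rfl
      rw [RCLike.re_to_real, hip, hnorm, div_le_iff₀ hnpos] at hle
      have e1 : ∑ i, z i * S.mulVec z i = (inner ℝ (T zE) zE : ℝ) := by
        rw [hTsymm zE zE, hinner]
        exact Finset.sum_congr rfl fun i _ => rfl
      have e2 : ‖zE‖ ^ 2 = ∑ i, z i ^ 2 := by
        rw [← real_inner_self_eq_norm_sq, hinner]
        exact Finset.sum_congr rfl fun i _ => (pow_two (z i)).symm
      rw [e1]
      calc (inner ℝ (T zE) zE : ℝ) ≤ μ * ‖zE‖ ^ 2 := hle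
      _ = μ * ∑ i, z i ^ 2 := by rw [e2]

lemma contraction {n : ℕ} (hn : 2 ≤ n) (π : Fin n → ℝ) (hπpos : ∀ i, 0 < π i)
    (A : Matrix (Fin n) (Fin n) ℝ) (hrow : ∀ i, ∑ j, A i j = 1)
    (hperron : ∀ j, ∑ i, π i * A i j = π j) :
    0 ≤ lambda2 π (piAdj π A * A) ∧
    ∀ y : Fin n → ℝ, (∑ i, π i * y i) = 0 →
      ∑ i, π i * (A.mulVec y i) ^ 2 ≤ lambda2 π (piAdj π A * A) * ∑ i, π i * y i ^ 2 := by
  classical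
  have hπ0 : ∀ i, π i ≠ 0 := fun i => (hπpos i).ne'
  have hs_pos : ∀ i, 0 < Real.sqrt (π i) := fun i => Real.sqrt_pos.mpr (hπpos i)
  have hs0 : ∀ i, Real.sqrt (π i) ≠ 0 := fun i => (hs_pos i).ne'
  have hsq : ∀ i, Real.sqrt (π i) * Real.sqrt (π i) = π i :=
    fun i => Real.mul_self_sqrt (hπpos i).le
  set M : Matrix (Fin n) (Fin n) ℝ := piAdj π A * A with hM
  have hMentry : ∀ i j, M i j = ∑ k, π k / π i * A k i * A k j := by
    intro i j
    simp [hM, Matrix.mul_apply, piAdj]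
  have key : ∀ i j, π i * M i j = ∑ k, π k * A k i * A k j := by
    intro i j
    rw [hMentry, Finset.mul_sum]
    exact Finset.sum_congr rfl fun k _ => by
      rw [div_mul_eq_mul_div, div_mul_eq_mul_div, mul_div_assoc']
      rw [mul_comm (π i), mul_div_assoc, div_self (hπ0 i), mul_one]
  have hMrow : ∀ i, ∑ j, M i j = 1 := by
    intro i
    have h : π i * ∑ j, M i j = π i := by
      rw [Finset.mul_sum]
      calc ∑ j, π i * M i j = ∑ j, ∑ k, π k * A k i * A k j :=
            Finset.sum_congr rfl fun j _ => key i j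
      _ = ∑ k, ∑ j, π k * A k i * A k j := Finset.sum_comm
      _ = ∑ k, π k * A k i := by
            refine Finset.sum_congr rfl fun k _ => ?_
            rw [← Finset.mul_sum, hrow k, mul_one]
      _ = π i := hperron i
    have := mul_left_cancel₀ (hπ0 i) (h.trans (mul_one (π i)).symm)
    exact this
  set S : Matrix (Fin n) (Fin n) ℝ :=
    Matrix.of fun i j => Real.sqrt (π i) / Real.sqrt (π j) * M i j with hSdef
  have hSentry : ∀ i j, S i j = Real.sqrt (π i) / Real.sqrt (π j) * M i j := fun i j => rfl
  have hSsymm : ∀ i j, S i j = S j i := by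
    intro i j
    rw [hSentry, hSentry]
    have h1 : π i * M i j = π j * M j i := by
      rw [key, key]
      exact Finset.sum_congr rfl fun k _ => by ring
    have h2 : M i j = π j * M j i / π i := by
      rw [← h1, mul_div_cancel_left₀ _ (hπ0 i)]
    have h2' : M i j = (Real.sqrt (π j) * Real.sqrt (π j)) * M j i
        / (Real.sqrt (π i) * Real.sqrt (π i)) := by rw [hsq, hsq]; exact h2
    rw [h2']
    field_simp [hs0 i, hs0 j]
  set w : Fin n → ℝ := fun i => Real.sqrt (π i) with hwdef
  have hwa : ∀ i, w i = Real.sqrt (π i) := fun i => rfl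
  have hw0 : w ≠ 0 := by
    intro h
    have := congrFun h ⟨0, by omega⟩
    exact hs0 _ this
  have hSw : S.mulVec w = w := by
    funext i
    show ∑ j, S i j * w j = w i
    calc ∑ j, S i j * w j = ∑ j, Real.sqrt (π i) * M i j := by
          refine Finset.sum_congr rfl fun j _ => ?_
          rw [hSentry, hwa]
          field_simp [hs0 j]
    _ = Real.sqrt (π i) := by rw [← Finset.mul_sum, hMrow, mul_one]
  -- how S acts on rescaled vectors
  have stepS : ∀ (y : Fin n → ℝ) (i : Fin n),
      S.mulVec (fun j => w j * y j) i = w i * M.mulVec y i := by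
    intro y i
    show ∑ j, S i j * (w j * y j) = w i * ∑ j, M i j * y j
    rw [Finset.mul_sum]
    refine Finset.sum_congr rfl fun j _ => ?_
    rw [hSentry, hwa, hwa]
    field_simp [hs0 j]
  obtain ⟨μ, ⟨u, hu0, huorth, huev⟩, hray⟩ := top_eigen_orth hn S hSsymm w hw0 hSw
  -- quadratic form identity
  have keyQ : ∀ y : Fin n → ℝ,
      ∑ i, (w i * y i) * S.mulVec (fun j => w j * y j) i = ∑ k, π k * (A.mulVec y k) ^ 2 := by
    intro y
    calc ∑ i, (w i * y i) * S.mulVec (fun j => w j * y j) i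
        = ∑ i, π i * y i * M.mulVec y i := by
          refine Finset.sum_congr rfl fun i _ => ?_
          rw [stepS]
          calc (w i * y i) * (w i * M.mulVec y i)
              = (w i * w i) * (y i * M.mulVec y i) := by ring
          _ = π i * (y i * M.mulVec y i) := by rw [hwa, hsq]
          _ = π i * y i * M.mulVec y i := by ring
    _ = ∑ i, ∑ j, ∑ k, π k * A k i * A k j * (y i * y j) := by
          refine Finset.sum_congr rfl fun i _ => ?_
          show π i * y i * (∑ j, M i j * y j) = _
          rw [Finset.mul_sum]
          refine Finset.sum_congr rfl fun j _ => ?_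
          have h : π i * y i * (M i j * y j) = (π i * M i j) * (y i * y j) := by ring
          rw [h, key i j, Finset.sum_mul]
    _ = ∑ k, ∑ i, ∑ j, π k * A k i * A k j * (y i * y j) := by
          rw [show (∑ i, ∑ j, ∑ k, π k * A k i * A k j * (y i * y j))
              = ∑ i, ∑ k, ∑ j, π k * A k i * A k j * (y i * y j) from
            Finset.sum_congr rfl fun i _ => Finset.sum_comm]
          exact Finset.sum_comm
    _ = ∑ k, π k * (A.mulVec y k) ^ 2 := by
          refine Finset.sum_congr rfl fun k _ => ?_
          show ∑ i, ∑ j, π k * A k i * A k j * (y i * y j)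
              = π k * (∑ i, A k i * y i) ^ 2
          rw [sq, Finset.sum_mul_sum, Finset.mul_sum]
          refine Finset.sum_congr rfl fun i _ => ?_
          rw [Finset.mul_sum]
          exact Finset.sum_congr rfl fun j _ => by ring
  -- every element of the lambda2 set is at most μ
  have transS : ∀ (l : ℝ) (xv : Fin n → ℝ), xv ≠ 0 → (∑ i, π i * xv i) = 0 →
      M.mulVec xv = l • xv → l ≤ μ := by
    intro l xv hx0 hxorth hxev
    set z : Fin n → ℝ := fun i => w i * xv i with hz
    have hz0 : z ≠ 0 := by
      intro h
      apply hx0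
      funext i
      have h2 := congrFun h i
      have h3 : w i * xv i = 0 := h2
      rcases mul_eq_zero.mp h3 with h4 | h4
      · exact absurd h4 (hs0 i)
      · exact h4
    have hzorth : ∑ i, w i * z i = 0 := by
      rw [← hxorth]
      refine Finset.sum_congr rfl fun i _ => ?_
      show w i * (w i * xv i) = π i * xv i
      rw [← mul_assoc, hwa, hsq]
    have hzev : ∀ i, S.mulVec z i = l * z i := by
      intro i
      rw [show z = fun j => w j * xv j from rfl, stepS]
      have := congrFun hxev i
      rw [show M.mulVec xv i = l • xv i from this]
      show w i * (l * xv i) = l * (w i * xv i)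
      ring
    have hsum := hray z hzorth
    have hLHS : ∑ i, z i * S.mulVec z i = l * ∑ i, z i ^ 2 := by
      rw [Finset.mul_sum]
      refine Finset.sum_congr rfl fun i _ => ?_
      rw [hzev i]
      ring
    rw [hLHS] at hsum
    have hzsq : 0 < ∑ i, z i ^ 2 := by
      obtain ⟨i, hi⟩ := Function.ne_iff.mp hz0
      have h1 : z i ^ 2 ≤ ∑ i, z i ^ 2 :=
        Finset.single_le_sum (fun j _ => sq_nonneg (z j)) (Finset.mem_univ i)
      have h2 : 0 < z i ^ 2 := lt_of_le_of_ne (sq_nonneg _) (Ne.symm (pow_ne_zero 2 hi))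
      linarith
    exact le_of_mul_le_mul_right (by linarith [hsum]) hzsq
  -- μ itself belongs to the lambda2 set
  set yu : Fin n → ℝ := fun i => u i / w i with hyu
  have hwyu : (fun j => w j * yu j) = u := by
    funext j
    show w j * (u j / w j) = u j
    rw [mul_comm, div_mul_cancel₀ _ (hs0 j)]
  have hyu0 : yu ≠ 0 := by
    intro h
    apply hu0
    funext i
    have h2 := congrFun h i
    have h3 : u i / w i = 0 := h2
    rcases div_eq_zero_iff.mp h3 with h4 | h4
    · exact h4
    · exact absurd h4 (hs0 i)
  have hyuorth : ∑ i, π i * yu i = 0 := by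
    rw [← huorth]
    refine Finset.sum_congr rfl fun i _ => ?_
    show π i * (u i / w i) = w i * u i
    rw [hwa, ← hsq i]
    field_simp [hs0 i]
    rw [Real.sq_sqrt (sq_nonneg _)]
    ring
  have hyuev : M.mulVec yu = μ • yu := by
    funext i
    have h1 : S.mulVec (fun j => w j * yu j) i = w i * M.mulVec yu i := stepS yu i
    rw [hwyu] at h1
    have h2 := congrFun huev i
    rw [h2] at h1
    show M.mulVec yu i = μ * yu i
    have h3 : w i * M.mulVec yu i = μ * u i := by
      rw [← h1]; rfl
    calc M.mulVec yu i = (w i)⁻¹ * (w i * M.mulVec yu i) :=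
          (inv_mul_cancel_left₀ (hs0 i) _).symm
    _ = (w i)⁻¹ * (μ * u i) := by rw [h3]
    _ = μ * yu i := by
          rw [hyu]
          show (w i)⁻¹ * (μ * u i) = μ * (u i / w i)
          rw [div_eq_mul_inv]
          ring
  have hμmem : μ ∈ {l : ℝ | ∃ x : Fin n → ℝ, x ≠ 0 ∧ (∑ i, π i * x i) = 0 ∧
      M.mulVec x = l • x} := ⟨yu, hyu0, hyuorth, hyuev⟩
  have hbdd : BddAbove {l : ℝ | ∃ x : Fin n → ℝ, x ≠ 0 ∧ (∑ i, π i * x i) = 0 ∧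
      M.mulVec x = l • x} := by
    refine ⟨μ, ?_⟩
    rintro l ⟨xv, hx0, hxorth, hxev⟩
    exact transS l xv hx0 hxorth hxev
  have hlam : lambda2 π M = μ := by
    apply le_antisymm
    · exact csSup_le ⟨μ, hμmem⟩ fun l hl => by
        obtain ⟨xv, hx0, hxorth, hxev⟩ := hl
        exact transS l xv hx0 hxorth hxev
    · exact le_csSup hbdd hμmem
  have hμ0 : 0 ≤ μ := by
    have h1 : ∑ i, u i * S.mulVec u i = ∑ k, π k * (A.mulVec yu k) ^ 2 := by
      rw [← keyQ yu]
      refine Finset.sum_congr rfl fun i _ => ?_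
      rw [hwyu, congrFun hwyu i]
    have h2 : ∑ i, u i * S.mulVec u i = μ * ∑ i, u i ^ 2 := by
      rw [Finset.mul_sum]
      refine Finset.sum_congr rfl fun i _ => ?_
      rw [show S.mulVec u i = μ * u i from congrFun huev i]
      ring
    have h3 : (0:ℝ) ≤ ∑ k, π k * (A.mulVec yu k) ^ 2 :=
      Finset.sum_nonneg fun k _ => mul_nonneg (hπpos k).le (sq_nonneg _)
    have husq : 0 < ∑ i, u i ^ 2 := by
      obtain ⟨i, hi⟩ := Function.ne_iff.mp hu0
      have ha : u i ^ 2 ≤ ∑ i, u i ^ 2 :=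
        Finset.single_le_sum (fun j _ => sq_nonneg (u j)) (Finset.mem_univ i)
      have hb : 0 < u i ^ 2 := lt_of_le_of_ne (sq_nonneg _) (Ne.symm (pow_ne_zero 2 hi))
      linarith
    nlinarith [h2, h1, h3]
  constructor
  · rw [hlam]; exact hμ0
  · intro y hy
    rw [hlam]
    have h1 := keyQ y
    have horth : ∑ i, w i * (w i * y i) = 0 := by
      rw [← hy]
      refine Finset.sum_congr rfl fun i _ => ?_
      rw [← mul_assoc, hwa, hsq]
    have h2 := hray (fun i => w i * y i) horth
    beta_reduce at h2
    have h3 : ∑ i, (w i * y i) ^ 2 = ∑ i, π i * y i ^ 2 := by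
      refine Finset.sum_congr rfl fun i _ => ?_
      calc (w i * y i) ^ 2 = (w i * w i) * y i ^ 2 := by ring
      _ = π i * y i ^ 2 := by rw [hwa, hsq]
    rw [h1, h3] at h2
    exact h2

theorem averaging_convergence_rate {n : ℕ} (hn : 2 ≤ n)
    (π : Fin n → ℝ) (A : ℕ → Matrix (Fin n) (Fin n) ℝ)
    (hπpos : ∀ i, 0 < π i) (hπsum : ∑ i, π i = 1)
    (hstoch : ∀ t, 1 ≤ t → IsStochastic (A t))
    (hirr : ∀ t, 1 ≤ t → IsIrreducibleM (A t))
    (hdiag : ∀ t, 1 ≤ t → ∀ i, 0 < A t i i)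
    (hperron : ∀ t, 1 ≤ t → ∀ j, ∑ i, π i * A t i j = π j)
    (x : ℕ → Fin n → ℝ)
    (hx : ∀ t, x (t + 1) = (A (t + 1)).mulVec (x t))
    (β : ℝ) (hβ1 : β < 1)
    (hβ : ∀ t, 1 ≤ t → lambda2 π (piAdj π (A t) * A t) ≤ β) :
    (∀ t, ∑ i, π i * (x t i - (∑ j, π j * x 0 j)) ^ 2
        ≤ β ^ t * ∑ i, π i * (x 0 i - (∑ j, π j * x 0 j)) ^ 2) ∧
    Tendsto x atTop (nhds (fun _ => ∑ j, π j * x 0 j)) ∧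
    limsup (fun t : ℕ => dist (x t) (fun _ => ∑ j, π j * x 0 j) ^ ((1 : ℝ) / t)) atTop
      ≤ Real.sqrt β := by
  classical
  set m : ℝ := ∑ j, π j * x 0 j with hm
  set y : ℕ → Fin n → ℝ := fun t i => x t i - m with hy
  have hy0 : ∑ i, π i * y 0 i = 0 := by
    have h1 : ∑ i, π i * (x 0 i - m) = (∑ i, π i * x 0 i) - m * ∑ i, π i := by
      rw [Finset.mul_sum, ← Finset.sum_sub_distrib]
      exact Finset.sum_congr rfl fun i _ => by ring
    show ∑ i, π i * (x 0 i - m) = 0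
    rw [h1, hπsum, mul_one, hm]
    ring
  have hstep : ∀ t, y (t + 1) = (A (t + 1)).mulVec (y t) := by
    intro t
    funext i
    have ht1 : 1 ≤ t + 1 := Nat.le_add_left 1 t
    show x (t + 1) i - m = ∑ j, A (t + 1) i j * y t j
    rw [hx t]
    show ∑ j, A (t + 1) i j * x t j - m = ∑ j, A (t + 1) i j * (x t j - m)
    have h1 : ∑ j, A (t + 1) i j * (x t j - m)
        = (∑ j, A (t + 1) i j * x t j) - m * ∑ j, A (t + 1) i j := by
      rw [Finset.mul_sum, ← Finset.sum_sub_distrib]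
      exact Finset.sum_congr rfl fun j _ => by ring
    rw [h1, (hstoch (t + 1) ht1).2 i, mul_one]
  have horth : ∀ t, ∑ i, π i * y t i = 0 := by
    intro t
    induction t with
    | zero => exact hy0
    | succ t ih =>
      rw [hstep t]
      have ht1 : 1 ≤ t + 1 := Nat.le_add_left 1 t
      calc ∑ i, π i * (A (t + 1)).mulVec (y t) i
          = ∑ i, ∑ j, π i * A (t + 1) i j * y t j := by
            refine Finset.sum_congr rfl fun i _ => ?_
            show π i * ∑ j, A (t + 1) i j * y t j = _
            rw [Finset.mul_sum]
            exact Finset.sum_congr rfl fun j _ => by ring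
      _ = ∑ j, ∑ i, π i * A (t + 1) i j * y t j := Finset.sum_comm
      _ = ∑ j, π j * y t j := by
            refine Finset.sum_congr rfl fun j _ => ?_
            rw [← Finset.sum_mul, hperron (t + 1) ht1 j]
      _ = 0 := ih
  set V : ℕ → ℝ := fun t => ∑ i, π i * y t i ^ 2 with hV
  have hVnn : ∀ t, 0 ≤ V t :=
    fun t => Finset.sum_nonneg fun i _ => mul_nonneg (hπpos i).le (sq_nonneg _)
  have hβ0 : 0 ≤ β :=
    le_trans (contraction hn π hπpos (A 1) (hstoch 1 le_rfl).2 (hperron 1 le_rfl)).1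
      (hβ 1 le_rfl)
  have hcontr : ∀ t, V (t + 1) ≤ β * V t := by
    intro t
    have ht1 : 1 ≤ t + 1 := Nat.le_add_left 1 t
    have h1 := (contraction hn π hπpos (A (t + 1)) (hstoch (t + 1) ht1).2
      (hperron (t + 1) ht1)).2 (y t) (horth t)
    calc V (t + 1) = ∑ i, π i * ((A (t + 1)).mulVec (y t) i) ^ 2 := by
          show ∑ i, π i * y (t + 1) i ^ 2 = _
          rw [hstep t]
    _ ≤ lambda2 π (piAdj π (A (t + 1)) * A (t + 1)) * ∑ i, π i * y t i ^ 2 := h1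
    _ ≤ β * V t := mul_le_mul_of_nonneg_right (hβ (t + 1) ht1) (hVnn t)
  have hVt : ∀ t, V t ≤ β ^ t * V 0 := by
    intro t
    induction t with
    | zero => simp
    | succ t ih =>
      calc V (t + 1) ≤ β * V t := hcontr t
      _ ≤ β * (β ^ t * V 0) := mul_le_mul_of_nonneg_left ih hβ0
      _ = β ^ (t + 1) * V 0 := by ring
  -- uniform coordinatewise bound
  set K : ℝ := V 0 * ∑ j, (π j)⁻¹ with hK
  have hKnn : 0 ≤ K :=
    mul_nonneg (hVnn 0) (Finset.sum_nonneg fun j _ => (inv_nonneg.mpr (hπpos j).le))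
  have hc0 : 0 ≤ Real.sqrt β := Real.sqrt_nonneg β
  have hsqrtpow : ∀ t : ℕ, Real.sqrt (β ^ t) = Real.sqrt β ^ t := by
    intro t
    rw [show β ^ t = (Real.sqrt β ^ t) ^ 2 by
      rw [← pow_mul, mul_comm, pow_mul, Real.sq_sqrt hβ0]]
    exact Real.sqrt_sq (pow_nonneg hc0 t)
  have hcoord : ∀ t i, |y t i| ≤ Real.sqrt β ^ t * Real.sqrt K := by
    intro t i
    have h1 : π i * y t i ^ 2 ≤ V t :=
      Finset.single_le_sum (fun j _ => mul_nonneg (hπpos j).le (sq_nonneg _))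
        (Finset.mem_univ i)
    have hπiinv : (π i)⁻¹ ≤ ∑ j, (π j)⁻¹ :=
      Finset.single_le_sum (fun j _ => inv_nonneg.mpr (hπpos j).le) (Finset.mem_univ i)
    have h2 : y t i ^ 2 ≤ β ^ t * K := by
      have h3 : y t i ^ 2 ≤ V t * (π i)⁻¹ := by
        rw [← div_eq_mul_inv, le_div_iff₀ (hπpos i)]
        calc y t i ^ 2 * π i = π i * y t i ^ 2 := by ring
        _ ≤ V t := h1
      calc y t i ^ 2 ≤ V t * (π i)⁻¹ := h3
      _ ≤ (β ^ t * V 0) * (π i)⁻¹ :=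
            mul_le_mul_of_nonneg_right (hVt t) (inv_nonneg.mpr (hπpos i).le)
      _ ≤ (β ^ t * V 0) * ∑ j, (π j)⁻¹ :=
            mul_le_mul_of_nonneg_left hπiinv
              (mul_nonneg (pow_nonneg hβ0 t) (hVnn 0))
      _ = β ^ t * K := by rw [hK]; ring
    calc |y t i| = Real.sqrt (y t i ^ 2) := (Real.sqrt_sq_eq_abs _).symm
    _ ≤ Real.sqrt (β ^ t * K) := Real.sqrt_le_sqrt h2
    _ = Real.sqrt (β ^ t) * Real.sqrt K := Real.sqrt_mul (pow_nonneg hβ0 t) K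
    _ = Real.sqrt β ^ t * Real.sqrt K := by rw [hsqrtpow]
  have hc1 : Real.sqrt β < 1 := by
    rw [show (1 : ℝ) = Real.sqrt 1 from Real.sqrt_one.symm]
    exact Real.sqrt_lt_sqrt hβ0 hβ1
  have h0 : Tendsto (fun t : ℕ => Real.sqrt β ^ t * Real.sqrt K) atTop (nhds 0) := by
    rw [show (0 : ℝ) = 0 * Real.sqrt K from (zero_mul _).symm]
    exact (tendsto_pow_atTop_nhds_zero_of_lt_one hc0 hc1).mul_const _
  have htendx : Tendsto x atTop (nhds fun _ => m) := by
    rw [tendsto_pi_nhds]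
    intro i
    have hyto : Tendsto (fun t => y t i) atTop (nhds 0) :=
      squeeze_zero_norm (fun t => by simpa using hcoord t i) h0
    have h2 : Tendsto (fun t => y t i + m) atTop (nhds (0 + m)) :=
      hyto.add tendsto_const_nhds
    rw [zero_add] at h2
    have h3 : (fun t => y t i + m) = fun t => x t i := by
      funext t
      show x t i - m + m = x t i
      ring
    rwa [h3] at h2
  refine ⟨fun t => hVt t, htendx, ?_⟩
  -- limsup bound
  set D : ℝ := Real.sqrt K + 1 with hD
  have hD1 : 1 ≤ D := by linarith [Real.sqrt_nonneg K]
  have hD0 : 0 < D := by linarith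
  have hdistb : ∀ t, dist (x t) (fun _ => m) ≤ Real.sqrt β ^ t * D := by
    intro t
    have hnn : 0 ≤ Real.sqrt β ^ t * D := mul_nonneg (pow_nonneg hc0 t) hD0.le
    rw [dist_pi_le_iff hnn]
    intro i
    rw [Real.dist_eq]
    calc |x t i - m| = |y t i| := rfl
    _ ≤ Real.sqrt β ^ t * Real.sqrt K := hcoord t i
    _ ≤ Real.sqrt β ^ t * D :=
        mul_le_mul_of_nonneg_left (by linarith) (pow_nonneg hc0 t)
  have hfle : ∀ᶠ t : ℕ in atTop, dist (x t) (fun _ => m) ^ ((1 : ℝ) / t)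
      ≤ Real.sqrt β * D ^ ((1 : ℝ) / t) := by
    filter_upwards [eventually_ge_atTop 1] with t ht
    have ht0 : (t : ℝ) ≠ 0 := Nat.cast_ne_zero.mpr (by omega)
    have h1t : (0 : ℝ) ≤ 1 / t := by positivity
    calc dist (x t) (fun _ => m) ^ ((1 : ℝ) / t)
        ≤ (Real.sqrt β ^ t * D) ^ ((1 : ℝ) / t) :=
          Real.rpow_le_rpow dist_nonneg (hdistb t) h1t
    _ = (Real.sqrt β ^ t) ^ ((1 : ℝ) / t) * D ^ ((1 : ℝ) / t) :=
          Real.mul_rpow (pow_nonneg hc0 t) hD0.le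
    _ = Real.sqrt β * D ^ ((1 : ℝ) / t) := by
          congr 1
          rw [← Real.rpow_natCast (Real.sqrt β) t, ← Real.rpow_mul hc0]
          rw [show (t : ℝ) * ((1 : ℝ) / t) = 1 from by field_simp]
          exact Real.rpow_one _
  have hgt : Tendsto (fun t : ℕ => Real.sqrt β * D ^ ((1 : ℝ) / t)) atTop
      (nhds (Real.sqrt β)) := by
    have h2 : Tendsto (fun t : ℕ => D ^ ((1 : ℝ) / t)) atTop (nhds (D ^ (0 : ℝ))) :=
      Filter.Tendsto.rpow tendsto_const_nhds tendsto_one_div_atTop_nhds_zero_nat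
        (Or.inl hD0.ne')
    rw [Real.rpow_zero] at h2
    have h3 := (tendsto_const_nhds (x := Real.sqrt β) (f := atTop (α := ℕ))).mul h2
    rwa [mul_one] at h3
  calc limsup (fun t : ℕ => dist (x t) (fun _ => m) ^ ((1 : ℝ) / t)) atTop
      ≤ limsup (fun t : ℕ => Real.sqrt β * D ^ ((1 : ℝ) / t)) atTop := by
        refine limsup_le_limsup hfle ?_ ?_
        · exact isCoboundedUnder_le_of_eventually_le atTop
            (Eventually.of_forall fun t => Real.rpow_nonneg dist_nonneg _)
        · exact hgt.isBoundedUnder_le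
  _ = Real.sqrt β := hgt.limsup_eq
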